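/- Let A ⊆ ℝ² be a measurable set with Lebesgue measure 0 < |A| < ∞, let x : ℝ² → ℝ^k be a bounded measurable covariate map, fix β ∈ ℝ^{k+1} and set λ_β(y) = exp(β_0 + Σ_{j=1}^k x_j(y) β_j). Fix presence points y_1, …, y_n ∈ A and let Y_{n+1}, Y_{n+2}, … be i.i.d. random points uniformly distributed on A. For j, j' ∈ {0, 1, …, k} (with x_0 ≡ 1) define the discretized information entry I_{jj'}^{(m)} = (|A|/m)·( Σ_{i=1}^n x_j(y_i) x_{j'}(y_i) λ_β(y_i) + Σ_{i=n+1}^m x_j(Y_i) x_{j'}(Y_i) λ_β(Y_i) ). Then as m → ∞, I_{jj'}^{(m)} converges in probability to ∫_A x_j(y) x_{j'}(y) λ_β(y) dy, the (j,j') Fisher information entry of the continuous Poisson point-process log-likelihood l(β) = Σ_{i=1}^n log λ_β(y_i) − ∫_A λ_β(y) dy. -/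

import Mathlib

open Real Finset Filter MeasureTheory ProbabilityTheory

noncomputable section

/-- Extended covariate maps: `x_0 ≡ 1` together with `x_1, …, x_k`. -/
def xec {k : ℕ} (x : ℝ × ℝ → Fin k → ℝ) (j : Fin (k + 1)) (y : ℝ × ℝ) : ℝ :=
  (Fin.cons (1 : ℝ) (x y) : Fin (k + 1) → ℝ) j

/-- The intensity `λ_β(y) = exp(β_0 + Σ_{j=1}^k x_j(y) β_j)`. -/
def lamc {k : ℕ} (x : ℝ × ℝ → Fin k → ℝ) (β : Fin (k + 1) → ℝ) (y : ℝ × ℝ) : ℝ :=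
  Real.exp (β 0 + ∑ j : Fin k, x y j * β j.succ)

/-- The uniform distribution on a set `A ⊆ ℝ²`: the probability measure
proportional to Lebesgue measure restricted to `A`. -/
def unifOn (A : Set (ℝ × ℝ)) : Measure (ℝ × ℝ) :=
  (volume A)⁻¹ • volume.restrict A

set_option maxHeartbeats 1000000 in
/-- With presence points `y_1, …, y_n ∈ A` fixed and `Y_{n+1}, Y_{n+2}, …` i.i.d.
uniform on `A`, the discretized information entry
`I_{jj'}^{(m)} = (|A|/m)(Σ_{i=1}^n x_j(y_i) x_{j'}(y_i) λ_β(y_i) + Σ_{i=n+1}^m x_j(Y_i) x_{j'}(Y_i) λ_β(Y_i))`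
converges in probability, as `m → ∞`, to `∫_A x_j(y) x_{j'}(y) λ_β(y) dy`, the
`(j,j')` Fisher information entry of the continuous Poisson point-process
log-likelihood. -/
theorem stmt_10 {k : ℕ} (A : Set (ℝ × ℝ)) (hA : MeasurableSet A)
    (h0 : volume A ≠ 0) (hfin : volume A ≠ ⊤)
    (x : ℝ × ℝ → Fin k → ℝ) (hxm : Measurable x) (M : ℝ) (hbd : ∀ y, ‖x y‖ ≤ M)
    (β : Fin (k + 1) → ℝ) (n : ℕ) (y : ℕ → ℝ × ℝ) (hy : ∀ i < n, y i ∈ A)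
    {Ω : Type*} [MeasurableSpace Ω] (μ : Measure Ω) [IsProbabilityMeasure μ]
    (Y : ℕ → Ω → ℝ × ℝ) (hYmeas : ∀ i, Measurable (Y i))
    (hindep : iIndepFun Y μ)
    (hunif : ∀ i, Measure.map (Y i) μ = unifOn A)
    (j j' : Fin (k + 1)) :
    TendstoInMeasure μ
      (fun m ω =>
        ((volume A).toReal / m) *
          ((∑ i ∈ Finset.range n, xec x j (y i) * xec x j' (y i) * lamc x β (y i)) +
            ∑ i ∈ Finset.Ico n m, xec x j (Y i ω) * xec x j' (Y i ω) * lamc x β (Y i ω)))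
      Filter.atTop
      (fun _ => ∫ z in A, xec x j z * xec x j' z * lamc x β z) := by
  classical
  set f : ℝ × ℝ → ℝ := fun z => xec x j z * xec x j' z * lamc x β z with hf
  -- measurability of f
  have hxec : ∀ jj : Fin (k + 1), Measurable (fun z => xec x jj z) := by
    intro jj
    induction jj using Fin.cases with
    | zero => simpa [xec] using measurable_const
    | succ i => simp only [xec, Fin.cons_succ]; exact (measurable_pi_apply i).comp hxm
  have hlamc : Measurable (lamc x β) := by
    apply Real.measurable_exp.comp
    apply Measurable.add measurable_const
    exact Finset.measurable_sum _ fun i _ =>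
      ((measurable_pi_apply i).comp hxm).mul measurable_const
  have hfm : Measurable f := ((hxec j).mul (hxec j')).mul hlamc
  -- boundedness of f
  have hM0 : 0 ≤ M := le_trans (norm_nonneg _) (hbd (0, 0))
  set C : ℝ := (max 1 M) ^ 2 * Real.exp (|β 0| + ∑ i : Fin k, M * |β i.succ|) with hC
  have hxbd : ∀ (jj : Fin (k + 1)) z, |xec x jj z| ≤ max 1 M := by
    intro jj z
    induction jj using Fin.cases with
    | zero => simp [xec]
    | succ i =>
      simp only [xec, Fin.cons_succ]
      calc |x z i| = ‖x z i‖ := (Real.norm_eq_abs _).symm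
        _ ≤ ‖x z‖ := norm_le_pi_norm (x z) i
        _ ≤ M := hbd z
        _ ≤ max 1 M := le_max_right _ _
  have hfbd : ∀ z, ‖f z‖ ≤ C := by
    intro z
    have h1 : |lamc x β z| ≤ Real.exp (|β 0| + ∑ i : Fin k, M * |β i.succ|) := by
      unfold lamc
      rw [abs_of_pos (Real.exp_pos _)]
      apply Real.exp_le_exp.2
      apply add_le_add (le_abs_self _)
      apply Finset.sum_le_sum
      intro i _
      calc x z i * β i.succ ≤ |x z i * β i.succ| := le_abs_self _
        _ = |x z i| * |β i.succ| := abs_mul _ _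
        _ ≤ M * |β i.succ| := by
            apply mul_le_mul_of_nonneg_right _ (abs_nonneg _)
            exact le_trans (norm_le_pi_norm (x z) i) (hbd z)
    have h2 := hxbd j z
    have h3 := hxbd j' z
    have hone : (0:ℝ) ≤ max 1 M := le_trans zero_le_one (le_max_left _ _)
    calc ‖f z‖ = |xec x j z| * |xec x j' z| * |lamc x β z| := by
          simp [hf, abs_mul, Real.norm_eq_abs]
      _ ≤ (max 1 M) * (max 1 M) * Real.exp (|β 0| + ∑ i : Fin k, M * |β i.succ|) := by
          apply mul_le_mul _ h1 (abs_nonneg _) (by positivity)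
          exact mul_le_mul h2 h3 (abs_nonneg _) hone
      _ = C := by ring
  -- the iid sequence f ∘ Y i
  set X : ℕ → Ω → ℝ := fun i ω => f (Y i ω) with hX
  have hXm : ∀ i, Measurable (X i) := fun i => hfm.comp (hYmeas i)
  have hXint : Integrable (X 0) μ :=
    (integrable_const C).mono' (hXm 0).aestronglyMeasurable
      (Filter.Eventually.of_forall fun ω => hfbd _)
  have hXindep : Pairwise (Function.onFun (IndepFun · · μ) X) := by
    intro i i' hii
    exact (hindep.indepFun hii).comp hfm hfm
  have hXident : ∀ i, IdentDistrib (X i) (X 0) μ μ := by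
    intro i
    have : IdentDistrib (Y i) (Y 0) μ μ :=
      ⟨(hYmeas i).aemeasurable, (hYmeas 0).aemeasurable, by rw [hunif, hunif]⟩
    exact this.comp hfm
  have hslln := ProbabilityTheory.strong_law_ae_real X hXint hXindep hXident
  -- compute the expectation
  have hAne : (volume A).toReal ≠ 0 := ENNReal.toReal_ne_zero.2 ⟨h0, hfin⟩
  have hE : μ[X 0] = ((volume A).toReal)⁻¹ * ∫ z in A, f z := by
    have : μ[X 0] = ∫ z, f z ∂(Measure.map (Y 0) μ) :=
      (integral_map (hYmeas 0).aemeasurable hfm.aestronglyMeasurable).symm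
    rw [this, hunif 0, unifOn, integral_smul_measure, ENNReal.toReal_inv, smul_eq_mul]
  -- a.e. convergence of the full expression
  have hae : ∀ᵐ ω ∂μ, Tendsto
      (fun m : ℕ => ((volume A).toReal / m) *
        ((∑ i ∈ Finset.range n, xec x j (y i) * xec x j' (y i) * lamc x β (y i)) +
          ∑ i ∈ Finset.Ico n m, X i ω))
      atTop (nhds (∫ z in A, f z)) := by
    filter_upwards [hslln] with ω hω
    set D : ℝ := (∑ i ∈ Finset.range n, xec x j (y i) * xec x j' (y i) * lamc x β (y i))
      - ∑ i ∈ Finset.range n, X i ω with hD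
    have htend : Tendsto
        (fun m : ℕ => (volume A).toReal * (D / m + (∑ i ∈ Finset.range m, X i ω) / m))
        atTop (nhds ((volume A).toReal * (0 + μ[X 0]))) := by
      apply Tendsto.const_mul
      apply Tendsto.add _ hω
      simpa using tendsto_const_nhds.div_atTop tendsto_natCast_atTop_atTop
    have hval : (volume A).toReal * (0 + μ[X 0]) = ∫ z in A, f z := by
      rw [hE, zero_add, ← mul_assoc, mul_inv_cancel₀ hAne, one_mul]
    rw [hval] at htend
    apply htend.congr'
    filter_upwards [Filter.eventually_ge_atTop n, Filter.eventually_gt_atTop 0]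
      with m hm hm0
    have hm0' : (m : ℝ) ≠ 0 := Nat.cast_ne_zero.2 hm0.ne'
    have hsplit : ∑ i ∈ Finset.Ico n m, X i ω
        = (∑ i ∈ Finset.range m, X i ω) - ∑ i ∈ Finset.range n, X i ω := by
      rw [Finset.sum_Ico_eq_sub _ hm]
    rw [hsplit, hD]
    field_simp
    ring_nf
  -- measurability of each approximant, and conclusion
  have hmeas : ∀ m : ℕ, AEStronglyMeasurable
      (fun ω => ((volume A).toReal / m) *
        ((∑ i ∈ Finset.range n, xec x j (y i) * xec x j' (y i) * lamc x β (y i)) +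
          ∑ i ∈ Finset.Ico n m, X i ω)) μ := by
    intro m
    apply Measurable.aestronglyMeasurable
    exact measurable_const.mul (measurable_const.add
      (Finset.measurable_sum _ fun i _ => hXm i))
  exact tendstoInMeasure_of_tendsto_ae hmeas hae
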